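/- The iterates of the discrete scheme satisfy: (i) the sequence (φ̂^{n+1/2})_{n≥0} is entrywise nonincreasing in n and each φ̂^{n+1/2} belongs to M_ε, with ε := exp(−(‖u_T‖_∞ + ‖f‖_∞ T)/σ²); (ii) the sequence (ψ̂ⁿ)_{n≥0} is entrywise nondecreasing in n, each ψ̂ⁿ belongs to M_0, and all entries of every ψ̂ⁿ are bounded above by ‖m_0‖_∞/ε. -/

import Mathlib

noncomputable section

open Real Filter

/-- Sup of `|g|` over `[0,1]` (the sup norm `‖g‖_∞`). -/
def supIcc (g : ℝ → ℝ) : ℝ := ⨆ x : Set.Icc (0:ℝ) 1, |g (x : ℝ)|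

/-- Sup of `|f|` over `[0,1] × ℝ` (the sup norm `‖f‖_∞`). -/
def supF (f : ℝ → ℝ → ℝ) : ℝ := ⨆ p : Set.Icc (0:ℝ) 1 × ℝ, |f (p.1 : ℝ) p.2|

/-- Membership in `M_ε`: all grid entries (for `i ≤ I`, `j ≤ J`) are at least `ε`. -/
def MemM (I J : ℕ) (ε : ℝ) (m : ℕ → ℕ → ℝ) : Prop :=
  ∀ i ≤ I, ∀ j ≤ J, ε ≤ m i j

/-- The discrete backward scheme `(Ê_φ)` with data `ψ`.  Here `Δt = T/I`, `Δx = 1/J`,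
`x_j = j/J`, and the Neumann conventions `m_{i,-1} = m_{i,0}`, `m_{i,J+1} = m_{i,J}`
are realized by the clamped indices `j - 1` (truncated `ℕ`-subtraction) and `min (j+1) J`. -/
def BScheme (T σ : ℝ) (I J : ℕ) (f : ℝ → ℝ → ℝ) (uT : ℝ → ℝ)
    (ψ φ : ℕ → ℕ → ℝ) : Prop :=
  (∀ i < I, ∀ j ≤ J,
      (φ (i+1) j - φ i j) / (T / (I:ℝ))
        + σ^2 / 2 * ((φ i (min (j+1) J) - 2 * φ i j + φ i (j-1)) / (1/(J:ℝ))^2)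
      = -(1/σ^2) * f ((j:ℝ)/(J:ℝ)) (φ i j * ψ i j) * φ i j)
  ∧ ∀ j ≤ J, φ I j = Real.exp (uT ((j:ℝ)/(J:ℝ)) / σ^2)

/-- The discrete forward scheme `(Ê_ψ)` with data `φ` (same conventions as `BScheme`). -/
def FScheme (T σ : ℝ) (I J : ℕ) (f : ℝ → ℝ → ℝ) (m0 : ℝ → ℝ)
    (φ ψ : ℕ → ℕ → ℝ) : Prop :=
  (∀ i < I, ∀ j ≤ J,
      (ψ (i+1) j - ψ i j) / (T / (I:ℝ))
        - σ^2 / 2 * ((ψ (i+1) (min (j+1) J) - 2 * ψ (i+1) j + ψ (i+1) (j-1)) / (1/(J:ℝ))^2)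
      = (1/σ^2) * f ((j:ℝ)/(J:ℝ)) (φ (i+1) j * ψ (i+1) j) * ψ (i+1) j)
  ∧ ∀ j ≤ J, ψ 0 j = m0 ((j:ℝ)/(J:ℝ)) / φ 0 j

/-- Squared grid norm `‖m‖² = max_{0 ≤ i ≤ I} (1/(J+1)) Σ_{j=0}^{J} m_{i,j}²`. -/
def gnormSq (I J : ℕ) (m : ℕ → ℕ → ℝ) : ℝ :=
  (Finset.range (I+1)).sup' (Finset.nonempty_range_iff.mpr (Nat.succ_ne_zero I))
    (fun i => (1/((J:ℝ)+1)) * ∑ j ∈ Finset.range (J+1), (m i j)^2)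

/-- Grid norm `‖m‖`. -/
def gnorm (I J : ℕ) (m : ℕ → ℕ → ℝ) : ℝ := Real.sqrt (gnormSq I J m)

/-! ### Auxiliary lemmas -/

lemma algB' (T σ : ℝ) (I J : ℕ) (hT : T ≠ 0) (hσ : σ ≠ 0) (hI : (I:ℝ) ≠ 0)
    (p q a b F : ℝ)
    (h : (q - p) / (T / (I:ℝ)) + σ^2/2 * ((a - 2*p + b)/(1/(J:ℝ))^2) = -(1/σ^2)*F*p) :
    p * (1 + 2*(T/(I:ℝ)*σ^2/2*(J:ℝ)^2) + (T/(I:ℝ)/σ^2) * (-F))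
      = q + (T/(I:ℝ)*σ^2/2*(J:ℝ)^2)*(a+b) := by
  have hTI : (T/(I:ℝ)) ≠ 0 := div_ne_zero hT hI
  field_simp at h ⊢
  linear_combination (-1) * h

lemma algF' (T σ : ℝ) (I J : ℕ) (hT : T ≠ 0) (hσ : σ ≠ 0) (hI : (I:ℝ) ≠ 0)
    (p r a b F : ℝ)
    (h : (p - r) / (T / (I:ℝ)) - σ^2/2 * ((a - 2*p + b)/(1/(J:ℝ))^2) = (1/σ^2)*F*p) :
    p * (1 + 2*(T/(I:ℝ)*σ^2/2*(J:ℝ)^2) + (T/(I:ℝ)/σ^2) * (-F))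
      = r + (T/(I:ℝ)*σ^2/2*(J:ℝ)^2)*(a+b) := by
  have hTI : (T/(I:ℝ)) ≠ 0 := div_ne_zero hT hI
  field_simp at h ⊢
  linear_combination (1) * h

lemma keyGe (lam mu p q a b c : ℝ) (hlam : 0 ≤ lam)
    (h : p * (1 + 2*lam + mu*c) = q + lam*(a+b)) (ha : p ≤ a) (hb : p ≤ b) :
    q ≤ p * (1 + mu*c) := by
  have h2 : lam*(p+p) ≤ lam*(a+b) := mul_le_mul_of_nonneg_left (add_le_add ha hb) hlam
  have h3 : p*(1+2*lam+mu*c) = p*(1+mu*c) + lam*(p+p) := by ring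
  linarith

lemma keyLe (lam mu p q a b c : ℝ) (hlam : 0 ≤ lam)
    (h : p * (1 + 2*lam + mu*c) = q + lam*(a+b)) (ha : a ≤ p) (hb : b ≤ p) :
    p * (1 + mu*c) ≤ q := by
  have h2 : lam*(a+b) ≤ lam*(p+p) := mul_le_mul_of_nonneg_left (add_le_add ha hb) hlam
  have h3 : p*(1+2*lam+mu*c) = p*(1+mu*c) + lam*(p+p) := by ring
  linarith

lemma supIcc_ge (g : ℝ → ℝ) (hb : ∃ B : ℝ, ∀ x ∈ Set.Icc (0:ℝ) 1, |g x| ≤ B)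
    {x : ℝ} (hx : x ∈ Set.Icc (0:ℝ) 1) : |g x| ≤ supIcc g := by
  obtain ⟨B, hBB⟩ := hb
  refine le_ciSup (f := fun y : Set.Icc (0:ℝ) 1 => |g (y:ℝ)|) ?_ ⟨x, hx⟩
  exact ⟨B, by rintro y ⟨⟨z, hz⟩, rfl⟩; exact hBB z hz⟩

lemma supF_ge (f : ℝ → ℝ → ℝ)
    (hb : ∃ B : ℝ, ∀ x ∈ Set.Icc (0:ℝ) 1, ∀ ξ : ℝ, |f x ξ| ≤ B)
    {x ξ : ℝ} (hx : x ∈ Set.Icc (0:ℝ) 1) : |f x ξ| ≤ supF f := by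
  obtain ⟨B, hB⟩ := hb
  refine le_ciSup (f := fun p : Set.Icc (0:ℝ) 1 × ℝ => |f (p.1 : ℝ) p.2|) ?_ ⟨⟨x, hx⟩, ξ⟩
  exact ⟨B, by rintro y ⟨⟨⟨z, hz⟩, ζ⟩, rfl⟩; exact hB z hz ζ⟩

lemma xj_mem (J : ℕ) (hJ : 1 ≤ J) {j : ℕ} (hj : j ≤ J) :
    (j:ℝ)/(J:ℝ) ∈ Set.Icc (0:ℝ) 1 := by
  have hJ0 : (0:ℝ) < (J:ℝ) := by exact_mod_cast hJ
  constructor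
  · positivity
  · rw [div_le_one hJ0]; exact_mod_cast hj

/-- Lower bound on the solution of the backward scheme. -/
lemma phiLower (T σ : ℝ) (hT : 0 < T) (hσ : 0 < σ) (I J : ℕ) (hI : 1 ≤ I) (hJ : 1 ≤ J)
    (f : ℝ → ℝ → ℝ) (uT : ℝ → ℝ)
    (hfb : ∃ B : ℝ, ∀ x ∈ Set.Icc (0:ℝ) 1, ∀ ξ : ℝ, |f x ξ| ≤ B)
    (hfneg : ∀ x ∈ Set.Icc (0:ℝ) 1, ∀ ξ : ℝ, f x ξ ≤ 0)
    (huTb : ∃ B : ℝ, ∀ x ∈ Set.Icc (0:ℝ) 1, |uT x| ≤ B)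
    (ψ φ : ℕ → ℕ → ℝ) (hs : BScheme T σ I J f uT ψ φ) :
    ∀ i ≤ I, ∀ j ≤ J, Real.exp (-(supIcc uT + supF f * T) / σ^2) ≤ φ i j := by
  have hI0 : (0:ℝ) < (I:ℝ) := by exact_mod_cast hI
  have hJ0 : (0:ℝ) < (J:ℝ) := by exact_mod_cast hJ
  set K := supF f with hKdef
  set A := supIcc uT with hAdef
  set lam := T/(I:ℝ)*σ^2/2*(J:ℝ)^2 with hlamdef
  set mu := T/(I:ℝ)/σ^2 with hmudef
  have hK0 : 0 ≤ K := (abs_nonneg (f 0 0)).trans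
    (supF_ge f hfb (x := 0) (ξ := 0) ⟨le_refl 0, zero_le_one⟩)
  have hlam : 0 < lam := by positivity
  have hmu : 0 < mu := by positivity
  have hBpos : (0:ℝ) < 1 + mu*K := by positivity
  set e0 := Real.exp (-A/σ^2) with he0def
  have main : ∀ d ≤ I, ∀ j ≤ J, e0 / (1+mu*K)^d ≤ φ (I - d) j := by
    intro d
    induction d with
    | zero =>
      intro _ j hj
      simp only [pow_zero, div_one, Nat.sub_zero]
      rw [hs.2 j hj]
      apply Real.exp_le_exp.mpr
      have hx := supIcc_ge uT huTb (xj_mem J hJ hj)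
      have hA2 : -A ≤ uT ((j:ℝ)/(J:ℝ)) := by
        rw [hAdef]
        linarith [neg_abs_le (uT ((j:ℝ)/(J:ℝ)))]
      exact (div_le_div_iff_of_pos_right (by positivity)).mpr hA2
    | succ d ih =>
      intro hd j hj
      have hdI : d ≤ I := Nat.le_of_succ_le hd
      have hiI : I - (d+1) < I := by omega
      have hsucc : I - (d+1) + 1 = I - d := by omega
      obtain ⟨j₀, hj₀m, hmin⟩ := Finset.exists_min_image (Finset.range (J+1))
        (fun k => φ (I-(d+1)) k) ⟨0, by simp⟩
      have hj₀ : j₀ ≤ J := by have := Finset.mem_range.mp hj₀m; omega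
      have hmin' : ∀ k ≤ J, φ (I-(d+1)) j₀ ≤ φ (I-(d+1)) k := fun k hk =>
        hmin k (Finset.mem_range.mpr (by omega))
      have hrel := algB' T σ I J (ne_of_gt hT) (ne_of_gt hσ) (ne_of_gt hI0)
        (φ (I-(d+1)) j₀) (φ (I-(d+1)+1) j₀) (φ (I-(d+1)) (min (j₀+1) J))
        (φ (I-(d+1)) (j₀-1)) (f ((j₀:ℝ)/(J:ℝ)) (φ (I-(d+1)) j₀ * ψ (I-(d+1)) j₀))
        (hs.1 (I-(d+1)) hiI j₀ hj₀)
      set F := f ((j₀:ℝ)/(J:ℝ)) (φ (I-(d+1)) j₀ * ψ (I-(d+1)) j₀) with hFdef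
      have hxm := xj_mem J hJ hj₀
      have hc0 : 0 ≤ -F := neg_nonneg.mpr (hfneg _ hxm _)
      have hcK : -F ≤ K := (neg_le_abs F).trans (supF_ge f hfb hxm)
      have key := keyGe lam mu _ _ _ _ (-F) hlam.le hrel
        (hmin' _ (min_le_right _ _)) (hmin' _ (le_trans (Nat.sub_le _ _) hj₀))
      have hq : e0/(1+mu*K)^d ≤ φ (I-(d+1)+1) j₀ := by
        rw [hsucc]; exact ih hdI j₀ hj₀
      have hqpos : (0:ℝ) < e0/(1+mu*K)^d := by positivity
      have h1F : (0:ℝ) < 1 + mu*(-F) := by nlinarith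
      have hp0 : 0 < φ (I-(d+1)) j₀ := by
        by_contra hcon
        push_neg at hcon
        nlinarith
      have h2 : φ (I-(d+1)) j₀ * (1+mu*(-F)) ≤ φ (I-(d+1)) j₀ * (1+mu*K) := by
        apply mul_le_mul_of_nonneg_left _ hp0.le
        have := mul_le_mul_of_nonneg_left hcK hmu.le
        linarith
      have hj₀bd : e0/(1+mu*K)^(d+1) ≤ φ (I-(d+1)) j₀ := by
        rw [div_le_iff₀ (by positivity), pow_succ]
        have h3 : e0 ≤ φ (I-(d+1)+1) j₀ * (1+mu*K)^d := by
          rw [div_le_iff₀ (by positivity)] at hq; exact hq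
        have h4 : φ (I-(d+1)+1) j₀ * (1+mu*K)^d
            ≤ (φ (I-(d+1)) j₀ * (1+mu*K)) * (1+mu*K)^d :=
          mul_le_mul_of_nonneg_right (key.trans h2) (by positivity)
        calc e0 ≤ (φ (I-(d+1)) j₀ * (1+mu*K)) * (1+mu*K)^d := h3.trans h4
          _ = φ (I-(d+1)) j₀ * ((1+mu*K)^d * (1+mu*K)) := by ring
      exact hj₀bd.trans (hmin' j hj)
  intro i hi j hj
  have hd : I - (I - i) = i := Nat.sub_sub_self hi
  have h1 := main (I-i) (Nat.sub_le I i) j hj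
  rw [hd] at h1
  refine le_trans ?_ h1
  have hBe : (1+mu*K)^(I-i) ≤ Real.exp (K*T/σ^2) := by
    calc (1+mu*K)^(I-i) ≤ (1+mu*K)^I :=
          pow_le_pow_right₀ (by linarith [mul_nonneg hmu.le hK0]) (Nat.sub_le I i)
      _ ≤ (Real.exp (mu*K))^I := by
          apply pow_le_pow_left₀ (by positivity)
          linarith [Real.add_one_le_exp (mu*K)]
      _ = Real.exp ((mu*K)*(I:ℝ)) := by
          rw [← Real.exp_nat_mul]; ring_nf
      _ = Real.exp (K*T/σ^2) := by
          congr 1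
          rw [hmudef]
          field_simp
  have : Real.exp (-(A + K*T) / σ^2) = e0 / Real.exp (K*T/σ^2) := by
    rw [he0def, ← Real.exp_sub]
    congr 1
    field_simp
    ring
  rw [this]
  exact div_le_div_of_nonneg_left (Real.exp_pos _).le (by positivity) hBe

/-- Nonnegativity of the solution of the forward scheme. -/
lemma psiNonneg (T σ : ℝ) (hT : 0 < T) (hσ : 0 < σ) (I J : ℕ) (hI : 1 ≤ I) (hJ : 1 ≤ J)
    (f : ℝ → ℝ → ℝ) (m0 : ℝ → ℝ)
    (hfneg : ∀ x ∈ Set.Icc (0:ℝ) 1, ∀ ξ : ℝ, f x ξ ≤ 0)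
    (hm0 : ∀ x ∈ Set.Icc (0:ℝ) 1, 0 ≤ m0 x)
    (φ ψ : ℕ → ℕ → ℝ) (hs : FScheme T σ I J f m0 φ ψ)
    (hφ0 : ∀ j ≤ J, 0 < φ 0 j) :
    ∀ i ≤ I, ∀ j ≤ J, 0 ≤ ψ i j := by
  have hI0 : (0:ℝ) < (I:ℝ) := by exact_mod_cast hI
  set lam := T/(I:ℝ)*σ^2/2*(J:ℝ)^2 with hlamdef
  set mu := T/(I:ℝ)/σ^2 with hmudef
  have hJ0 : (0:ℝ) < (J:ℝ) := by exact_mod_cast hJ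
  have hlam : 0 < lam := by positivity
  have hmu : 0 < mu := by positivity
  intro i
  induction i with
  | zero =>
    intro _ j hj
    rw [hs.2 j hj]
    exact div_nonneg (hm0 _ (xj_mem J hJ hj)) (hφ0 j hj).le
  | succ i ih =>
    intro hi j hj
    have hiI : i < I := hi
    obtain ⟨j₀, hj₀m, hmin⟩ := Finset.exists_min_image (Finset.range (J+1))
      (fun k => ψ (i+1) k) ⟨0, by simp⟩
    have hj₀ : j₀ ≤ J := by have := Finset.mem_range.mp hj₀m; omega
    have hmin' : ∀ k ≤ J, ψ (i+1) j₀ ≤ ψ (i+1) k := fun k hk =>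
      hmin k (Finset.mem_range.mpr (by omega))
    have hrel := algF' T σ I J (ne_of_gt hT) (ne_of_gt hσ) (ne_of_gt hI0)
      (ψ (i+1) j₀) (ψ i j₀) (ψ (i+1) (min (j₀+1) J)) (ψ (i+1) (j₀-1))
      (f ((j₀:ℝ)/(J:ℝ)) (φ (i+1) j₀ * ψ (i+1) j₀))
      (hs.1 i hiI j₀ hj₀)
    set F := f ((j₀:ℝ)/(J:ℝ)) (φ (i+1) j₀ * ψ (i+1) j₀) with hFdef
    have hc0 : 0 ≤ -F := neg_nonneg.mpr (hfneg _ (xj_mem J hJ hj₀) _)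
    have key := keyGe lam mu _ _ _ _ (-F) hlam.le hrel
      (hmin' _ (min_le_right _ _)) (hmin' _ (le_trans (Nat.sub_le _ _) hj₀))
    have hq : 0 ≤ ψ i j₀ := ih (Nat.le_of_succ_le hi) j₀ hj₀
    have h1F : (0:ℝ) < 1 + mu*(-F) := by nlinarith
    have hp0 : 0 ≤ ψ (i+1) j₀ := by nlinarith
    exact hp0.trans (hmin' j hj)

/-- Upper bound on the solution of the forward scheme. -/
lemma psiUpper (T σ : ℝ) (hT : 0 < T) (hσ : 0 < σ) (I J : ℕ) (hI : 1 ≤ I) (hJ : 1 ≤ J)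
    (f : ℝ → ℝ → ℝ) (m0 : ℝ → ℝ)
    (hfneg : ∀ x ∈ Set.Icc (0:ℝ) 1, ∀ ξ : ℝ, f x ξ ≤ 0)
    (hm0 : ∀ x ∈ Set.Icc (0:ℝ) 1, 0 ≤ m0 x)
    (hm0b : ∃ B : ℝ, ∀ x ∈ Set.Icc (0:ℝ) 1, |m0 x| ≤ B)
    (φ ψ : ℕ → ℕ → ℝ) (hs : FScheme T σ I J f m0 φ ψ)
    (ε : ℝ) (hε : 0 < ε) (hφ0 : ∀ j ≤ J, ε ≤ φ 0 j)
    (hψ0 : ∀ i ≤ I, ∀ j ≤ J, 0 ≤ ψ i j) :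
    ∀ i ≤ I, ∀ j ≤ J, ψ i j ≤ supIcc m0 / ε := by
  have hI0 : (0:ℝ) < (I:ℝ) := by exact_mod_cast hI
  set lam := T/(I:ℝ)*σ^2/2*(J:ℝ)^2 with hlamdef
  set mu := T/(I:ℝ)/σ^2 with hmudef
  have hJ0 : (0:ℝ) < (J:ℝ) := by exact_mod_cast hJ
  have hlam : 0 < lam := by positivity
  have hmu : 0 < mu := by positivity
  intro i
  induction i with
  | zero =>
    intro _ j hj
    rw [hs.2 j hj]
    have hxm := xj_mem J hJ hj
    have h1 : m0 ((j:ℝ)/(J:ℝ)) ≤ supIcc m0 :=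
      (le_abs_self _).trans (supIcc_ge m0 hm0b hxm)
    have h2 : 0 ≤ supIcc m0 := (abs_nonneg _).trans (supIcc_ge m0 hm0b hxm)
    exact div_le_div₀ h2 h1 hε (hφ0 j hj)
  | succ i ih =>
    intro hi j hj
    have hiI : i < I := hi
    obtain ⟨j₀, hj₀m, hmax⟩ := Finset.exists_max_image (Finset.range (J+1))
      (fun k => ψ (i+1) k) ⟨0, by simp⟩
    have hj₀ : j₀ ≤ J := by have := Finset.mem_range.mp hj₀m; omega
    have hmax' : ∀ k ≤ J, ψ (i+1) k ≤ ψ (i+1) j₀ := fun k hk =>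
      hmax k (Finset.mem_range.mpr (by omega))
    have hrel := algF' T σ I J (ne_of_gt hT) (ne_of_gt hσ) (ne_of_gt hI0)
      (ψ (i+1) j₀) (ψ i j₀) (ψ (i+1) (min (j₀+1) J)) (ψ (i+1) (j₀-1))
      (f ((j₀:ℝ)/(J:ℝ)) (φ (i+1) j₀ * ψ (i+1) j₀))
      (hs.1 i hiI j₀ hj₀)
    set F := f ((j₀:ℝ)/(J:ℝ)) (φ (i+1) j₀ * ψ (i+1) j₀) with hFdef
    have hc0 : 0 ≤ -F := neg_nonneg.mpr (hfneg _ (xj_mem J hJ hj₀) _)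
    have key := keyLe lam mu _ _ _ _ (-F) hlam.le hrel
      (hmax' _ (min_le_right _ _)) (hmax' _ (le_trans (Nat.sub_le _ _) hj₀))
    have hq : ψ i j₀ ≤ supIcc m0 / ε := ih (Nat.le_of_succ_le hi) j₀ hj₀
    have hp0 : 0 ≤ ψ (i+1) j₀ := hψ0 (i+1) hi j₀ hj₀
    have hple : ψ (i+1) j₀ ≤ ψ (i+1) j₀ * (1 + mu*(-F)) := by
      have haux : ψ (i+1) j₀ * (1 + mu*(-F))
          = ψ (i+1) j₀ + ψ (i+1) j₀ * (mu * (-F)) := by ring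
      have haux2 : 0 ≤ ψ (i+1) j₀ * (mu*(-F)) :=
        mul_nonneg hp0 (mul_nonneg hmu.le hc0)
      linarith
    exact (hmax' j hj).trans (hple.trans (key.trans hq))

/-- Comparison for the backward scheme: larger data `ψ` gives smaller `φ`. -/
lemma phiComp (T σ : ℝ) (hT : 0 < T) (hσ : 0 < σ) (I J : ℕ) (hI : 1 ≤ I) (hJ : 1 ≤ J)
    (f : ℝ → ℝ → ℝ) (uT : ℝ → ℝ)
    (hfneg : ∀ x ∈ Set.Icc (0:ℝ) 1, ∀ ξ : ℝ, f x ξ ≤ 0)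
    (hfmono : ∀ x ∈ Set.Icc (0:ℝ) 1, Antitone (f x))
    (ψ φ ψ' φ' : ℕ → ℕ → ℝ)
    (hs : BScheme T σ I J f uT ψ φ) (hs' : BScheme T σ I J f uT ψ' φ')
    (hψle : ∀ i ≤ I, ∀ j ≤ J, ψ i j ≤ ψ' i j)
    (hψ0 : ∀ i ≤ I, ∀ j ≤ J, 0 ≤ ψ i j)
    (hφpos : ∀ i ≤ I, ∀ j ≤ J, 0 < φ i j) :
    ∀ i ≤ I, ∀ j ≤ J, φ' i j ≤ φ i j := by
  have hI0 : (0:ℝ) < (I:ℝ) := by exact_mod_cast hI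
  have hJ0 : (0:ℝ) < (J:ℝ) := by exact_mod_cast hJ
  set lam := T/(I:ℝ)*σ^2/2*(J:ℝ)^2 with hlamdef
  set mu := T/(I:ℝ)/σ^2 with hmudef
  have hlam : 0 < lam := by positivity
  have hmu : 0 < mu := by positivity
  have main : ∀ d ≤ I, ∀ j ≤ J, φ' (I - d) j ≤ φ (I - d) j := by
    intro d
    induction d with
    | zero =>
      intro _ j hj
      simp only [Nat.sub_zero]
      rw [hs.2 j hj, hs'.2 j hj]
    | succ d ih =>
      intro hd j hj
      have hdI : d ≤ I := Nat.le_of_succ_le hd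
      have hiI : I - (d+1) < I := by omega
      have hiI' : I - (d+1) ≤ I := Nat.sub_le _ _
      have hsucc : I - (d+1) + 1 = I - d := by omega
      set i := I - (d+1) with hidef
      obtain ⟨j₀, hj₀m, hmax⟩ := Finset.exists_max_image (Finset.range (J+1))
        (fun k => φ' i k - φ i k) ⟨0, by simp⟩
      have hj₀ : j₀ ≤ J := by have := Finset.mem_range.mp hj₀m; omega
      have hmax' : ∀ k ≤ J, φ' i k - φ i k ≤ φ' i j₀ - φ i j₀ := fun k hk =>
        hmax k (Finset.mem_range.mpr (by omega))
      have hw : φ' i j₀ ≤ φ i j₀ := by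
        by_contra hcon
        push_neg at hcon
        have hxm := xj_mem J hJ hj₀
        have hrel := algB' T σ I J (ne_of_gt hT) (ne_of_gt hσ) (ne_of_gt hI0)
          (φ i j₀) (φ (i+1) j₀) (φ i (min (j₀+1) J)) (φ i (j₀-1))
          (f ((j₀:ℝ)/(J:ℝ)) (φ i j₀ * ψ i j₀)) (hs.1 i hiI j₀ hj₀)
        have hrel' := algB' T σ I J (ne_of_gt hT) (ne_of_gt hσ) (ne_of_gt hI0)
          (φ' i j₀) (φ' (i+1) j₀) (φ' i (min (j₀+1) J)) (φ' i (j₀-1))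
          (f ((j₀:ℝ)/(J:ℝ)) (φ' i j₀ * ψ' i j₀)) (hs'.1 i hiI j₀ hj₀)
        rw [← hlamdef, ← hmudef] at hrel hrel'
        set c := -(f ((j₀:ℝ)/(J:ℝ)) (φ i j₀ * ψ i j₀)) with hcdef
        set c' := -(f ((j₀:ℝ)/(J:ℝ)) (φ' i j₀ * ψ' i j₀)) with hc'def
        have hc0 : 0 ≤ c := neg_nonneg.mpr (hfneg _ hxm _)
        have hP0 : 0 < φ i j₀ := hφpos i hiI' j₀ hj₀
        have hψn : 0 ≤ ψ i j₀ := hψ0 i hiI' j₀ hj₀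
        have hprod : φ i j₀ * ψ i j₀ ≤ φ' i j₀ * ψ' i j₀ := by
          have h1 : φ i j₀ * ψ i j₀ ≤ φ' i j₀ * ψ i j₀ :=
            mul_le_mul_of_nonneg_right hcon.le hψn
          have h2 : φ' i j₀ * ψ i j₀ ≤ φ' i j₀ * ψ' i j₀ :=
            mul_le_mul_of_nonneg_left (hψle i hiI' j₀ hj₀) (hP0.trans hcon).le
          exact h1.trans h2
        have hcc' : c ≤ c' := neg_le_neg (hfmono _ hxm hprod)
        -- key inequalities
        have hQ : φ' (i+1) j₀ ≤ φ (i+1) j₀ := by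
          have := ih hdI j₀ hj₀
          rwa [← hsucc] at this
        have ha : φ' i (min (j₀+1) J) - φ i (min (j₀+1) J) ≤ φ' i j₀ - φ i j₀ :=
          hmax' _ (min_le_right _ _)
        have hb : φ' i (j₀-1) - φ i (j₀-1) ≤ φ' i j₀ - φ i j₀ :=
          hmax' _ (le_trans (Nat.sub_le _ _) hj₀)
        have t1 : mu * (c * φ i j₀) ≤ mu * (c' * φ' i j₀) := by
          apply mul_le_mul_of_nonneg_left _ hmu.le
          calc c * φ i j₀ ≤ c * φ' i j₀ := mul_le_mul_of_nonneg_left hcon.le hc0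
            _ ≤ c' * φ' i j₀ := mul_le_mul_of_nonneg_right hcc' (hP0.trans hcon).le
        have e1 : φ' i j₀ * (1 + 2*lam + mu*c')
            = φ' i j₀ + 2*(lam*φ' i j₀) + mu*(c'*φ' i j₀) := by ring
        have e2 : φ i j₀ * (1 + 2*lam + mu*c)
            = φ i j₀ + 2*(lam*φ i j₀) + mu*(c*φ i j₀) := by ring
        have t2 : lam*(φ' i (min (j₀+1) J) + φ' i (j₀-1))
            ≤ lam*(φ i (min (j₀+1) J) + φ i (j₀-1)) + 2*(lam*φ' i j₀) - 2*(lam*φ i j₀) := by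
          have := mul_le_mul_of_nonneg_left (add_le_add ha hb) hlam.le
          nlinarith [this]
        linarith [hrel, hrel', e1, e2, t1, t2, hQ]
      have := hmax' j hj
      linarith
  intro i hi j hj
  have hd : I - (I - i) = i := Nat.sub_sub_self hi
  have := main (I-i) (Nat.sub_le I i) j hj
  rwa [hd] at this

/-- Comparison for the forward scheme: smaller data `φ` gives larger `ψ`. -/
lemma psiComp (T σ : ℝ) (hT : 0 < T) (hσ : 0 < σ) (I J : ℕ) (hI : 1 ≤ I) (hJ : 1 ≤ J)
    (f : ℝ → ℝ → ℝ) (m0 : ℝ → ℝ)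
    (hfneg : ∀ x ∈ Set.Icc (0:ℝ) 1, ∀ ξ : ℝ, f x ξ ≤ 0)
    (hfmono : ∀ x ∈ Set.Icc (0:ℝ) 1, Antitone (f x))
    (hm0 : ∀ x ∈ Set.Icc (0:ℝ) 1, 0 ≤ m0 x)
    (φ ψ φ' ψ' : ℕ → ℕ → ℝ)
    (hs : FScheme T σ I J f m0 φ ψ) (hs' : FScheme T σ I J f m0 φ' ψ')
    (hφle : ∀ i ≤ I, ∀ j ≤ J, φ' i j ≤ φ i j)
    (hφ'pos : ∀ i ≤ I, ∀ j ≤ J, 0 < φ' i j)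
    (hψ'0 : ∀ i ≤ I, ∀ j ≤ J, 0 ≤ ψ' i j) :
    ∀ i ≤ I, ∀ j ≤ J, ψ i j ≤ ψ' i j := by
  have hI0 : (0:ℝ) < (I:ℝ) := by exact_mod_cast hI
  have hJ0 : (0:ℝ) < (J:ℝ) := by exact_mod_cast hJ
  set lam := T/(I:ℝ)*σ^2/2*(J:ℝ)^2 with hlamdef
  set mu := T/(I:ℝ)/σ^2 with hmudef
  have hlam : 0 < lam := by positivity
  have hmu : 0 < mu := by positivity
  intro i
  induction i with
  | zero =>
    intro _ j hj
    rw [hs.2 j hj, hs'.2 j hj]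
    gcongr
    · exact hm0 _ (xj_mem J hJ hj)
    · exact hφ'pos 0 (Nat.zero_le I) j hj
    · exact hφle 0 (Nat.zero_le I) j hj
  | succ i ih =>
    intro hi j hj
    have hiI : i < I := hi
    have hi1 : i + 1 ≤ I := hi
    obtain ⟨j₀, hj₀m, hmin⟩ := Finset.exists_min_image (Finset.range (J+1))
      (fun k => ψ' (i+1) k - ψ (i+1) k) ⟨0, by simp⟩
    have hj₀ : j₀ ≤ J := by have := Finset.mem_range.mp hj₀m; omega
    have hmin' : ∀ k ≤ J, ψ' (i+1) j₀ - ψ (i+1) j₀ ≤ ψ' (i+1) k - ψ (i+1) k := fun k hk =>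
      hmin k (Finset.mem_range.mpr (by omega))
    have hw : ψ (i+1) j₀ ≤ ψ' (i+1) j₀ := by
      by_contra hcon
      push_neg at hcon
      have hxm := xj_mem J hJ hj₀
      have hrel := algF' T σ I J (ne_of_gt hT) (ne_of_gt hσ) (ne_of_gt hI0)
        (ψ (i+1) j₀) (ψ i j₀) (ψ (i+1) (min (j₀+1) J)) (ψ (i+1) (j₀-1))
        (f ((j₀:ℝ)/(J:ℝ)) (φ (i+1) j₀ * ψ (i+1) j₀)) (hs.1 i hiI j₀ hj₀)
      have hrel' := algF' T σ I J (ne_of_gt hT) (ne_of_gt hσ) (ne_of_gt hI0)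
        (ψ' (i+1) j₀) (ψ' i j₀) (ψ' (i+1) (min (j₀+1) J)) (ψ' (i+1) (j₀-1))
        (f ((j₀:ℝ)/(J:ℝ)) (φ' (i+1) j₀ * ψ' (i+1) j₀)) (hs'.1 i hiI j₀ hj₀)
      rw [← hlamdef, ← hmudef] at hrel hrel'
      set c := -(f ((j₀:ℝ)/(J:ℝ)) (φ (i+1) j₀ * ψ (i+1) j₀)) with hcdef
      set c' := -(f ((j₀:ℝ)/(J:ℝ)) (φ' (i+1) j₀ * ψ' (i+1) j₀)) with hc'def
      have hc0 : 0 ≤ c := neg_nonneg.mpr (hfneg _ hxm _)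
      have hP'0 : 0 ≤ ψ' (i+1) j₀ := hψ'0 (i+1) hi1 j₀ hj₀
      have hφ'p : 0 < φ' (i+1) j₀ := hφ'pos (i+1) hi1 j₀ hj₀
      have hprod : φ' (i+1) j₀ * ψ' (i+1) j₀ ≤ φ (i+1) j₀ * ψ (i+1) j₀ := by
        have h1 : φ' (i+1) j₀ * ψ' (i+1) j₀ ≤ φ' (i+1) j₀ * ψ (i+1) j₀ :=
          mul_le_mul_of_nonneg_left hcon.le hφ'p.le
        have h2 : φ' (i+1) j₀ * ψ (i+1) j₀ ≤ φ (i+1) j₀ * ψ (i+1) j₀ :=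
          mul_le_mul_of_nonneg_right (hφle (i+1) hi1 j₀ hj₀) (hP'0.trans hcon.le)
        exact h1.trans h2
      have hcc' : c' ≤ c := neg_le_neg (hfmono _ hxm hprod)
      have hR : ψ i j₀ ≤ ψ' i j₀ := ih (Nat.le_of_succ_le hi) j₀ hj₀
      have ha : ψ' (i+1) j₀ - ψ (i+1) j₀
          ≤ ψ' (i+1) (min (j₀+1) J) - ψ (i+1) (min (j₀+1) J) :=
        hmin' _ (min_le_right _ _)
      have hb : ψ' (i+1) j₀ - ψ (i+1) j₀ ≤ ψ' (i+1) (j₀-1) - ψ (i+1) (j₀-1) :=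
        hmin' _ (le_trans (Nat.sub_le _ _) hj₀)
      have t1 : mu * (c' * ψ' (i+1) j₀) ≤ mu * (c * ψ (i+1) j₀) := by
        apply mul_le_mul_of_nonneg_left _ hmu.le
        calc c' * ψ' (i+1) j₀ ≤ c * ψ' (i+1) j₀ :=
              mul_le_mul_of_nonneg_right hcc' hP'0
          _ ≤ c * ψ (i+1) j₀ := mul_le_mul_of_nonneg_left hcon.le hc0
      have e1 : ψ' (i+1) j₀ * (1 + 2*lam + mu*c')
          = ψ' (i+1) j₀ + 2*(lam*ψ' (i+1) j₀) + mu*(c'*ψ' (i+1) j₀) := by ring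
      have e2 : ψ (i+1) j₀ * (1 + 2*lam + mu*c)
          = ψ (i+1) j₀ + 2*(lam*ψ (i+1) j₀) + mu*(c*ψ (i+1) j₀) := by ring
      have t2 : lam*(ψ (i+1) (min (j₀+1) J) + ψ (i+1) (j₀-1))
          ≤ lam*(ψ' (i+1) (min (j₀+1) J) + ψ' (i+1) (j₀-1))
            + 2*(lam*ψ (i+1) j₀) - 2*(lam*ψ' (i+1) j₀) := by
        have h3 : ψ (i+1) (min (j₀+1) J) + ψ (i+1) (j₀-1)
            ≤ ψ' (i+1) (min (j₀+1) J) + ψ' (i+1) (j₀-1)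
              + 2*(ψ (i+1) j₀) - 2*(ψ' (i+1) j₀) := by linarith
        nlinarith [mul_le_mul_of_nonneg_left h3 hlam.le]
      linarith [hrel, hrel', e1, e2, t1, t2, hR]
    have := hmin' j hj
    linarith

theorem stmt_7 (T σ : ℝ) (hT : 0 < T) (hσ : 0 < σ)
    (I J : ℕ) (hI : 1 ≤ I) (hJ : 1 ≤ J)
    (f : ℝ → ℝ → ℝ) (uT m0 : ℝ → ℝ)
    (hfc : ∀ x ∈ Set.Icc (0:ℝ) 1, Continuous (f x))
    (hfb : ∃ B : ℝ, ∀ x ∈ Set.Icc (0:ℝ) 1, ∀ ξ : ℝ, |f x ξ| ≤ B)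
    (hfneg : ∀ x ∈ Set.Icc (0:ℝ) 1, ∀ ξ : ℝ, f x ξ ≤ 0)
    (hfmono : ∀ x ∈ Set.Icc (0:ℝ) 1, Antitone (f x))
    (huTb : ∃ B : ℝ, ∀ x ∈ Set.Icc (0:ℝ) 1, |uT x| ≤ B)
    (hm0b : ∃ B : ℝ, ∀ x ∈ Set.Icc (0:ℝ) 1, |m0 x| ≤ B)
    (hm0 : ∀ x ∈ Set.Icc (0:ℝ) 1, 0 ≤ m0 x)
    (Φs Ψs : ℕ → ℕ → ℕ → ℝ)
    (hΨ0 : ∀ i ≤ I, ∀ j ≤ J, Ψs 0 i j = 0)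
    (hB : ∀ n : ℕ, BScheme T σ I J f uT (Ψs n) (Φs n))
    (hF : ∀ n : ℕ, FScheme T σ I J f m0 (Φs n) (Ψs (n+1)))
 :
    (∀ n : ℕ, ∀ i ≤ I, ∀ j ≤ J, Φs (n+1) i j ≤ Φs n i j)
    ∧ (∀ n : ℕ, MemM I J (Real.exp (-(supIcc uT + supF f * T) / σ^2)) (Φs n))
    ∧ (∀ n : ℕ, ∀ i ≤ I, ∀ j ≤ J, Ψs n i j ≤ Ψs (n+1) i j)
    ∧ (∀ n : ℕ, MemM I J 0 (Ψs n))
    ∧ (∀ n : ℕ, ∀ i ≤ I, ∀ j ≤ J,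
        Ψs n i j ≤ supIcc m0 / Real.exp (-(supIcc uT + supF f * T) / σ^2)) := by
  set ε := Real.exp (-(supIcc uT + supF f * T) / σ^2) with hεdef
  have hε : 0 < ε := Real.exp_pos _
  have hA : ∀ n, MemM I J ε (Φs n) := fun n =>
    phiLower T σ hT hσ I J hI hJ f uT hfb hfneg huTb _ _ (hB n)
  have hNN : ∀ n, MemM I J 0 (Ψs n) := by
    intro n
    cases n with
    | zero => exact fun i hi j hj => (hΨ0 i hi j hj).ge
    | succ n =>
      exact psiNonneg T σ hT hσ I J hI hJ f m0 hfneg hm0 _ _ (hF n)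
        (fun j hj => lt_of_lt_of_le hε (hA n 0 (Nat.zero_le I) j hj))
  have hub : ∀ n, ∀ i ≤ I, ∀ j ≤ J, Ψs n i j ≤ supIcc m0 / ε := by
    intro n
    cases n with
    | zero =>
      intro i hi j hj
      rw [hΨ0 i hi j hj]
      have h2 : 0 ≤ supIcc m0 :=
        (abs_nonneg (m0 0)).trans (supIcc_ge m0 hm0b ⟨le_refl 0, zero_le_one⟩)
      positivity
    | succ n =>
      exact psiUpper T σ hT hσ I J hI hJ f m0 hfneg hm0 hm0b _ _ (hF n) ε hε
        (fun j hj => hA n 0 (Nat.zero_le I) j hj) (hNN (n+1))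
  have hmono : ∀ n, (∀ i ≤ I, ∀ j ≤ J, Ψs n i j ≤ Ψs (n+1) i j)
      ∧ (∀ i ≤ I, ∀ j ≤ J, Φs (n+1) i j ≤ Φs n i j) := by
    intro n
    induction n with
    | zero =>
      have hψ01 : ∀ i ≤ I, ∀ j ≤ J, Ψs 0 i j ≤ Ψs 1 i j := by
        intro i hi j hj
        rw [hΨ0 i hi j hj]
        exact hNN 1 i hi j hj
      refine ⟨hψ01, ?_⟩
      exact phiComp T σ hT hσ I J hI hJ f uT hfneg hfmono _ _ _ _ (hB 0) (hB 1)
        hψ01 (fun i hi j hj => (hΨ0 i hi j hj).ge)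
        (fun i hi j hj => lt_of_lt_of_le hε (hA 0 i hi j hj))
    | succ n ihn =>
      have hψ : ∀ i ≤ I, ∀ j ≤ J, Ψs (n+1) i j ≤ Ψs (n+2) i j :=
        psiComp T σ hT hσ I J hI hJ f m0 hfneg hfmono hm0 _ _ _ _ (hF n) (hF (n+1))
          ihn.2 (fun i hi j hj => lt_of_lt_of_le hε (hA (n+1) i hi j hj)) (hNN (n+2))
      refine ⟨hψ, ?_⟩
      exact phiComp T σ hT hσ I J hI hJ f uT hfneg hfmono _ _ _ _ (hB (n+1)) (hB (n+2))
        hψ (hNN (n+1)) (fun i hi j hj => lt_of_lt_of_le hε (hA (n+1) i hi j hj))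
  exact ⟨fun n => (hmono n).2, hA, fun n => (hmono n).1, hNN, hub⟩
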